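/- Let 𝖲 be the 4×4 integer matrix with rows (0,0,0,1), (0,0,1,0), (0,−1,0,0), (−1,0,0,0), and let T₀ be the 4×4 integer matrix with rows (1,0,0,0), (1,1,0,0), (17,35,1,0), (−10,−18,−1,1). Then T₀ᵀ · 𝖲 · T₀ = 𝖲, (T₀ − 1)⁴ = 0, and (T₀ − 1)³ ≠ 0; that is, T₀ is an integral symplectic matrix that is maximally unipotent. -/

import Mathlib

open Matrix in
private lemma aux_sub : (!![1,0,0,0; 1,1,0,0; 17,35,1,0; -10,-18,-1,1] : Matrix (Fin 4) (Fin 4) ℤ) - 1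
    = !![0,0,0,0; 1,0,0,0; 17,35,0,0; -10,-18,-1,0] := by
  ext i j; fin_cases i <;> fin_cases j <;>
    simp [Matrix.one_apply, Matrix.sub_apply, Matrix.vecHead, Matrix.vecTail]

open Matrix in
private lemma aux_sq : (!![0,0,0,0; 1,0,0,0; 17,35,0,0; -10,-18,-1,0] : Matrix (Fin 4) (Fin 4) ℤ) *
    !![0,0,0,0; 1,0,0,0; 17,35,0,0; -10,-18,-1,0] = !![0,0,0,0;0,0,0,0;35,0,0,0;-35,-35,0,0] := by
  ext i j; fin_cases i <;> fin_cases j <;>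
    norm_num [Matrix.mul_apply, Fin.sum_univ_four, Matrix.vecHead, Matrix.vecTail,
      Matrix.cons_val_two, Matrix.cons_val_three]

open Matrix in
private lemma aux_cube : (!![0,0,0,0;0,0,0,0;35,0,0,0;-35,-35,0,0] : Matrix (Fin 4) (Fin 4) ℤ) *
    !![0,0,0,0; 1,0,0,0; 17,35,0,0; -10,-18,-1,0] = !![0,0,0,0;0,0,0,0;0,0,0,0;-35,0,0,0] := by
  ext i j; fin_cases i <;> fin_cases j <;>
    norm_num [Matrix.mul_apply, Fin.sum_univ_four, Matrix.vecHead, Matrix.vecTail,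
      Matrix.cons_val_two, Matrix.cons_val_three]

open Matrix in
private lemma aux_four : (!![0,0,0,0;0,0,0,0;0,0,0,0;-35,0,0,0] : Matrix (Fin 4) (Fin 4) ℤ) *
    !![0,0,0,0; 1,0,0,0; 17,35,0,0; -10,-18,-1,0] = 0 := by
  ext i j; fin_cases i <;> fin_cases j <;>
    norm_num [Matrix.mul_apply, Fin.sum_univ_four, Matrix.vecHead, Matrix.vecTail,
      Matrix.cons_val_two, Matrix.cons_val_three]

open Matrix in
theorem monodromy_at_zero_maximally_unipotent :
    let S : Matrix (Fin 4) (Fin 4) ℤ :=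
      !![0,0,0,1; 0,0,1,0; 0,-1,0,0; -1,0,0,0]
    let T0 : Matrix (Fin 4) (Fin 4) ℤ :=
      !![1,0,0,0; 1,1,0,0; 17,35,1,0; -10,-18,-1,1]
    T0ᵀ * S * T0 = S ∧ (T0 - 1) ^ 4 = 0 ∧ (T0 - 1) ^ 3 ≠ 0 := by
  intro S T0
  have h2 : (T0 - 1) ^ 2 = !![0,0,0,0;0,0,0,0;35,0,0,0;-35,-35,0,0] := by
    rw [sq, aux_sub, aux_sq]
  have h3 : (T0 - 1) ^ 3 = !![0,0,0,0;0,0,0,0;0,0,0,0;-35,0,0,0] := by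
    rw [pow_succ, h2, aux_sub, aux_cube]
  refine ⟨?_, ?_, ?_⟩
  · ext i j; fin_cases i <;> fin_cases j <;>
      norm_num [S, T0, Matrix.mul_apply, Fin.sum_univ_four, Matrix.transpose_apply,
        Matrix.vecHead, Matrix.vecTail, Matrix.cons_val_two, Matrix.cons_val_three]
  · rw [pow_succ, h3, aux_sub, aux_four]
  · rw [h3]
    intro h
    have := congrArg (fun M => M 3 0) h
    norm_num [Matrix.vecHead, Matrix.vecTail, Matrix.cons_val_two, Matrix.cons_val_three] at this
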